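/- For every nonnegative integer n, positive integer t, and real numbers ℓ_1,...,ℓ_t with ℓ_1+...+ℓ_t = 0, the sum over t-tuples (i_1,...,i_t) of nonnegative integers with i_1+...+i_t = n of ∏_m binomial(2i_m + ℓ_m, i_m) equals (4^n / n!) * Γ(n + t/2) / Γ(t/2). -/

import Mathlib

open Finset Polynomial

/-- Generalized binomial coefficient with real upper argument. -/
noncomputable def rchoose (x : ℝ) (k : ℕ) : ℝ :=
  (∏ j ∈ Finset.range k, (x - j)) / (Nat.factorial k : ℝ)

lemma rchoose_zero (x : ℝ) : rchoose x 0 = 1 := by simp [rchoose]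

lemma rchoose_succ (x : ℝ) (k : ℕ) :
    rchoose x (k + 1) = rchoose x k * (x - k) / (k + 1) := by
  have hk : (k.factorial : ℝ) ≠ 0 := Nat.cast_ne_zero.2 k.factorial_ne_zero
  have : ((k+1).factorial : ℝ) = (k.factorial : ℝ) * (k+1) := by
    rw [Nat.factorial_succ]; push_cast; ring
  rw [rchoose, rchoose, Finset.prod_range_succ, this]
  field_simp

lemma rchoose_natCast (a k : ℕ) : rchoose (a : ℝ) k = (a.choose k : ℝ) := by
  induction k with
  | zero => simp [rchoose_zero]
  | succ k ih =>
    rw [rchoose_succ, ih]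
    rcases le_or_gt (k+1) a with h | h
    · have hsub : ((a - k : ℕ) : ℝ) = (a : ℝ) - k := by
        have : k ≤ a := le_trans (Nat.le_succ k) h
        push_cast [this]; ring
      have := Nat.choose_succ_right_eq a k
      have hc : ((a.choose (k+1) * (k+1) : ℕ) : ℝ) = ((a.choose k * (a - k) : ℕ) : ℝ) := by
        rw [this]
      push_cast [hsub] at hc
      have hk1 : ((k : ℝ) + 1) ≠ 0 := by positivity
      field_simp at hc ⊢
      linarith [hc]
    · rcases Nat.lt_succ_iff_lt_or_eq.mp h with h' | h'
      · rw [Nat.choose_eq_zero_of_lt h', Nat.choose_eq_zero_of_lt (Nat.lt_succ_of_lt h')]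
        simp
      · subst h'
        rw [Nat.choose_eq_zero_of_lt (Nat.lt_succ_self _), Nat.choose_self]
        simp

lemma poly_eq_of_nat_eval (p q : ℝ[X]) (h : ∀ a : ℕ, p.eval (a : ℝ) = q.eval (a : ℝ)) :
    p = q := by
  apply Polynomial.eq_of_infinite_eval_eq
  apply Set.infinite_of_injective_forall_mem (f := fun a : ℕ => (a : ℝ))
    (Nat.cast_injective)
  intro a; exact h a

noncomputable def rchoosePoly (c : ℝ) (k : ℕ) : ℝ[X] :=
  Polynomial.C ((k.factorial : ℝ))⁻¹ * ∏ j ∈ Finset.range k, (Polynomial.X + Polynomial.C (c - j))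

lemma rchoosePoly_eval (c x : ℝ) (k : ℕ) :
    (rchoosePoly c k).eval x = rchoose (x + c) k := by
  simp only [rchoosePoly, rchoose, eval_mul, eval_C, eval_prod, eval_add, eval_X,
    div_eq_inv_mul]
  congr 1
  apply Finset.prod_congr rfl
  intro j _
  ring


-- nat Vandermonde cast to ℝ in rchoose form
lemma vandermonde_nat (a b n : ℕ) :
    ∑ p ∈ Finset.HasAntidiagonal.antidiagonal n, rchoose (a : ℝ) p.1 * rchoose (b : ℝ) p.2
      = rchoose ((a : ℝ) + b) n := by
  have h := Nat.add_choose_eq a b n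
  have : (((a + b).choose n : ℕ) : ℝ)
      = ∑ p ∈ Finset.HasAntidiagonal.antidiagonal n, ((a.choose p.1 : ℝ) * (b.choose p.2 : ℝ)) := by
    rw [h]; push_cast; rfl
  rw [show ((a : ℝ) + b) = ((a + b : ℕ) : ℝ) by push_cast; ring, rchoose_natCast, this]
  apply Finset.sum_congr rfl
  intro p _
  rw [rchoose_natCast, rchoose_natCast]

lemma vandermonde_real (x y : ℝ) (n : ℕ) :
    ∑ p ∈ Finset.HasAntidiagonal.antidiagonal n, rchoose x p.1 * rchoose y p.2 = rchoose (x + y) n := by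
  -- step 1: x real, y nat
  have step1 : ∀ (x : ℝ) (b : ℕ),
      ∑ p ∈ Finset.HasAntidiagonal.antidiagonal n, rchoose x p.1 * rchoose (b : ℝ) p.2
        = rchoose (x + b) n := by
    intro x b
    have hpq : (∑ p ∈ Finset.HasAntidiagonal.antidiagonal n,
          rchoosePoly 0 p.1 * Polynomial.C (rchoose (b : ℝ) p.2)) = rchoosePoly (b : ℝ) n := by
      apply poly_eq_of_nat_eval
      intro a
      simp only [eval_finset_sum, eval_mul, eval_C, rchoosePoly_eval, add_zero]
      exact vandermonde_nat a b n
    have := congrArg (Polynomial.eval x) hpq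
    simpa only [eval_finset_sum, eval_mul, eval_C, rchoosePoly_eval, add_zero] using this
  have hpq : (∑ p ∈ Finset.HasAntidiagonal.antidiagonal n,
        Polynomial.C (rchoose x p.1) * rchoosePoly 0 p.2) = rchoosePoly x n := by
    apply poly_eq_of_nat_eval
    intro b
    simp only [eval_finset_sum, eval_mul, eval_C, rchoosePoly_eval, add_zero]
    rw [step1 x b, add_comm]
  have := congrArg (Polynomial.eval y) hpq
  simp only [eval_finset_sum, eval_mul, eval_C, rchoosePoly_eval, add_zero] at this
  rw [this, add_comm]
-- Nat convolution of shifted central binomials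
def A (a i : ℕ) : ℕ := (2 * i + a).choose i

def U (a b n : ℕ) : ℕ := ∑ p ∈ Finset.HasAntidiagonal.antidiagonal n, A a p.1 * A b p.2

lemma A_zero (a : ℕ) : A a 0 = 1 := by simp [A]

lemma A_rec (a i : ℕ) : A (a + 1) (i + 1) = A a (i + 1) + A (a + 2) i := by
  have h : 2 * (i + 1) + (a + 1) = (2 * (i+1) + a) + 1 := by ring
  rw [A, h, Nat.choose_succ_succ' ]
  · rw [show 2*(i+1)+a = 2*i+(a+2) by ring]
    rw [A, A, show 2*i+(a+2) = 2*(i+1)+a by ring]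
    ring_nf
lemma U_zero (a b : ℕ) : U a b 0 = 1 := by
  simp [U, Finset.Nat.antidiagonal_zero, A_zero]

lemma U_rec (a b n : ℕ) : U (a + 1) b (n + 1) = U a b (n + 1) + U (a + 2) b n := by
  rw [U, U, U, Finset.Nat.sum_antidiagonal_succ, Finset.Nat.sum_antidiagonal_succ]
  simp only [A_rec, add_mul, A_zero]
  rw [Finset.sum_add_distrib]
  ring

lemma U_symm (a b n : ℕ) : U a b n = U b a n := by
  rw [U, U, ← Finset.Nat.sum_antidiagonal_swap]
  apply Finset.sum_congr rfl
  intro p _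
  simp [Prod.swap, mul_comm]

lemma U_eq (n : ℕ) : ∀ a b : ℕ, U a b n = U (a + b) 0 n := by
  induction n using Nat.strong_induction_on with
  | _ n ihn =>
    have key : ∀ a b, U a b n = U (a + b) 0 n := by
      intro a
      induction a with
      | zero => intro b; rw [U_symm, Nat.zero_add]
      | succ a iha =>
        intro b
        cases n with
        | zero => rw [U_zero, U_zero]
        | succ m =>
          rw [show a + 1 + b = (a + b) + 1 by ring, U_rec, U_rec, iha b,
            ihn m (Nat.lt_succ_self m) (a + 2) b,
            show a + 2 + b = a + b + 2 by ring]
    exact key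
lemma rchoosePoly_eval' (c x : ℝ) (k : ℕ) :
    (rchoosePoly c k).eval x = rchoose (c + x) k := by
  rw [rchoosePoly_eval, add_comm]

lemma conv_pair_nat (a b n : ℕ) :
    ∑ p ∈ Finset.HasAntidiagonal.antidiagonal n,
        rchoose (2 * p.1 + (a : ℝ)) p.1 * rchoose (2 * p.2 + (b : ℝ)) p.2
      = ∑ p ∈ Finset.HasAntidiagonal.antidiagonal n,
          rchoose (2 * p.1 + ((a : ℝ) + b)) p.1 * rchoose (2 * p.2) p.2 := by
  have h := U_eq n a b
  have hc : ((U a b n : ℕ) : ℝ) = ((U (a + b) 0 n : ℕ) : ℝ) := by rw [h]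
  rw [U, U] at hc
  push_cast at hc
  calc ∑ p ∈ Finset.HasAntidiagonal.antidiagonal n,
        rchoose (2 * p.1 + (a : ℝ)) p.1 * rchoose (2 * p.2 + (b : ℝ)) p.2
      = ∑ p ∈ Finset.HasAntidiagonal.antidiagonal n, (A a p.1 : ℝ) * (A b p.2 : ℝ) := by
        apply Finset.sum_congr rfl; intro p _
        rw [A, A, show (2 * p.1 + (a:ℝ)) = ((2 * p.1 + a : ℕ) : ℝ) by push_cast; ring,
          show (2 * p.2 + (b:ℝ)) = ((2 * p.2 + b : ℕ) : ℝ) by push_cast; ring,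
          rchoose_natCast, rchoose_natCast]
    _ = ∑ p ∈ Finset.HasAntidiagonal.antidiagonal n, (A (a+b) p.1 : ℝ) * (A 0 p.2 : ℝ) := by
        push_cast; exact hc
    _ = ∑ p ∈ Finset.HasAntidiagonal.antidiagonal n,
          rchoose (2 * p.1 + ((a : ℝ) + b)) p.1 * rchoose (2 * p.2) p.2 := by
        apply Finset.sum_congr rfl; intro p _
        rw [A, A, show (2 * p.1 + ((a:ℝ) + b)) = ((2 * p.1 + (a + b) : ℕ) : ℝ) by push_cast; ring,
          show (2 * (p.2:ℝ)) = ((2 * p.2 + 0 : ℕ) : ℝ) by push_cast; ring,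
          rchoose_natCast, rchoose_natCast]

lemma conv_pair (a b : ℝ) (n : ℕ) :
    ∑ p ∈ Finset.HasAntidiagonal.antidiagonal n,
        rchoose (2 * p.1 + a) p.1 * rchoose (2 * p.2 + b) p.2
      = ∑ p ∈ Finset.HasAntidiagonal.antidiagonal n,
          rchoose (2 * p.1 + (a + b)) p.1 * rchoose (2 * p.2) p.2 := by
  have step1 : ∀ (a : ℝ) (b n : ℕ),
      ∑ p ∈ Finset.HasAntidiagonal.antidiagonal n,
          rchoose (2 * p.1 + a) p.1 * rchoose (2 * p.2 + (b : ℝ)) p.2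
        = ∑ p ∈ Finset.HasAntidiagonal.antidiagonal n,
            rchoose (2 * p.1 + (a + b)) p.1 * rchoose (2 * p.2) p.2 := by
    intro a b n
    have hpq : (∑ p ∈ Finset.HasAntidiagonal.antidiagonal n,
          rchoosePoly (2 * p.1) p.1 * Polynomial.C (rchoose (2 * p.2 + (b:ℝ)) p.2))
        = ∑ p ∈ Finset.HasAntidiagonal.antidiagonal n,
            rchoosePoly (2 * p.1 + (b:ℝ)) p.1 * Polynomial.C (rchoose (2 * p.2) p.2) := by
      apply poly_eq_of_nat_eval
      intro c
      simp only [Polynomial.eval_finset_sum, Polynomial.eval_mul, Polynomial.eval_C,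
        rchoosePoly_eval]
      calc ∑ p ∈ Finset.HasAntidiagonal.antidiagonal n,
            rchoose ((c:ℝ) + 2 * p.1) p.1 * rchoose (2 * p.2 + (b:ℝ)) p.2
          = ∑ p ∈ Finset.HasAntidiagonal.antidiagonal n,
              rchoose (2 * p.1 + (c : ℝ)) p.1 * rchoose (2 * p.2 + (b:ℝ)) p.2 := by
            apply Finset.sum_congr rfl; intro p _; rw [add_comm ((c:ℝ)) (2 * (p.1:ℝ))]
        _ = ∑ p ∈ Finset.HasAntidiagonal.antidiagonal n,
              rchoose (2 * p.1 + ((c : ℝ) + b)) p.1 * rchoose (2 * p.2) p.2 :=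
            conv_pair_nat c b n
        _ = ∑ p ∈ Finset.HasAntidiagonal.antidiagonal n,
              rchoose ((c:ℝ) + (2 * p.1 + (b:ℝ))) p.1 * rchoose (2 * p.2) p.2 := by
            apply Finset.sum_congr rfl; intro p _; ring_nf
    have := congrArg (Polynomial.eval a) hpq
    simp only [Polynomial.eval_finset_sum, Polynomial.eval_mul, Polynomial.eval_C,
      rchoosePoly_eval] at this
    calc ∑ p ∈ Finset.HasAntidiagonal.antidiagonal n,
          rchoose (2 * p.1 + a) p.1 * rchoose (2 * p.2 + (b:ℝ)) p.2
        = ∑ p ∈ Finset.HasAntidiagonal.antidiagonal n,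
            rchoose ((a:ℝ) + 2 * p.1) p.1 * rchoose (2 * p.2 + (b:ℝ)) p.2 := by
          apply Finset.sum_congr rfl; intro p _; rw [add_comm a (2 * (p.1:ℝ))]
      _ = ∑ p ∈ Finset.HasAntidiagonal.antidiagonal n,
            rchoose (a + (2 * p.1 + (b:ℝ))) p.1 * rchoose (2 * p.2) p.2 := this
      _ = ∑ p ∈ Finset.HasAntidiagonal.antidiagonal n,
            rchoose (2 * p.1 + (a + b)) p.1 * rchoose (2 * p.2) p.2 := by
          apply Finset.sum_congr rfl; intro p _; ring_nf
  have hpq : (∑ p ∈ Finset.HasAntidiagonal.antidiagonal n,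
        Polynomial.C (rchoose (2 * p.1 + a) p.1) * rchoosePoly (2 * p.2) p.2)
      = ∑ p ∈ Finset.HasAntidiagonal.antidiagonal n,
          rchoosePoly (2 * p.1 + a) p.1 * Polynomial.C (rchoose (2 * p.2) p.2) := by
    apply poly_eq_of_nat_eval
    intro b
    simp only [Polynomial.eval_finset_sum, Polynomial.eval_mul, Polynomial.eval_C,
      rchoosePoly_eval]
    calc ∑ p ∈ Finset.HasAntidiagonal.antidiagonal n,
          rchoose (2 * p.1 + a) p.1 * rchoose ((b:ℝ) + 2 * p.2) p.2
        = ∑ p ∈ Finset.HasAntidiagonal.antidiagonal n,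
            rchoose (2 * p.1 + a) p.1 * rchoose (2 * p.2 + (b:ℝ)) p.2 := by
          apply Finset.sum_congr rfl; intro p _; rw [add_comm ((b:ℝ)) (2 * (p.2:ℝ))]
      _ = ∑ p ∈ Finset.HasAntidiagonal.antidiagonal n,
            rchoose (2 * p.1 + (a + b)) p.1 * rchoose (2 * p.2) p.2 := step1 a b n
      _ = ∑ p ∈ Finset.HasAntidiagonal.antidiagonal n,
            rchoose ((b:ℝ) + (2 * p.1 + a)) p.1 * rchoose (2 * p.2) p.2 := by
          apply Finset.sum_congr rfl; intro p _; ring_nf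
  have := congrArg (Polynomial.eval b) hpq
  simp only [Polynomial.eval_finset_sum, Polynomial.eval_mul, Polynomial.eval_C,
    rchoosePoly_eval] at this
  calc ∑ p ∈ Finset.HasAntidiagonal.antidiagonal n,
        rchoose (2 * p.1 + a) p.1 * rchoose (2 * p.2 + b) p.2
      = ∑ p ∈ Finset.HasAntidiagonal.antidiagonal n,
          rchoose (2 * p.1 + a) p.1 * rchoose (b + 2 * p.2) p.2 := by
        apply Finset.sum_congr rfl; intro p _; rw [add_comm b (2 * (p.2:ℝ))]
    _ = ∑ p ∈ Finset.HasAntidiagonal.antidiagonal n,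
          rchoose (b + (2 * p.1 + a)) p.1 * rchoose (2 * p.2) p.2 := this
    _ = ∑ p ∈ Finset.HasAntidiagonal.antidiagonal n,
          rchoose (2 * p.1 + (a + b)) p.1 * rchoose (2 * p.2) p.2 := by
        apply Finset.sum_congr rfl; intro p _; ring_nf
-- central binomial in rchoose form
lemma central_rchoose (i : ℕ) :
    rchoose (2 * (i : ℝ)) i = (-4 : ℝ) ^ i * rchoose (-(1 : ℝ) / 2) i := by
  induction i with
  | zero => simp [rchoose_zero]
  | succ i ih =>
    have h1 : rchoose (2 * (((i:ℕ) + 1 : ℕ) : ℝ)) (i + 1)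
        = ((2*(i+1)).choose (i+1) : ℝ) := by
      rw [show 2 * (((i:ℕ)+1:ℕ):ℝ) = ((2*(i+1) : ℕ) : ℝ) by push_cast; ring, rchoose_natCast]
    have h0 : rchoose (2 * (i : ℝ)) i = ((2*i).choose i : ℝ) := by
      rw [show 2 * (i:ℝ) = ((2*i : ℕ) : ℝ) by push_cast; ring, rchoose_natCast]
    have hcb := Nat.succ_mul_centralBinom_succ i
    rw [Nat.centralBinom, Nat.centralBinom] at hcb
    have hcbR : ((i:ℝ) + 1) * ((2*(i+1)).choose (i+1) : ℝ)
        = 2 * (2*(i:ℝ)+1) * ((2*i).choose i : ℝ) := by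
      exact_mod_cast congrArg (fun x : ℕ => (x : ℝ)) hcb
    have hip : ((i:ℝ) + 1) ≠ 0 := by positivity
    have hp : ((-4:ℝ))^i ≠ 0 := pow_ne_zero _ (by norm_num)
    have hr : rchoose (-(1:ℝ)/2) i = ((2*i).choose i : ℝ) / (-4)^i := by
      rw [← h0, ih]; field_simp
    calc rchoose (2 * (((i:ℕ) + 1 : ℕ) : ℝ)) (i+1)
        = ((2*(i+1)).choose (i+1) : ℝ) := h1
      _ = 2*(2*(i:ℝ)+1)*((2*i).choose i : ℝ)/((i:ℝ)+1) := by
          field_simp; linarith [hcbR]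
      _ = (-4:ℝ)^(i+1) * rchoose (-(1:ℝ)/2) (i+1) := by
          rw [rchoose_succ, hr, pow_succ]
          field_simp
          ring
lemma rchoose_zero_left (k : ℕ) : rchoose 0 (k + 1) = 0 := by
  rw [rchoose]
  rw [Finset.prod_eq_zero (Finset.mem_range.2 (Nat.succ_pos k)) (by norm_num)]
  simp

noncomputable def Fs (a : ℝ) : PowerSeries ℝ :=
  PowerSeries.mk fun i => rchoose (2 * (i : ℝ) + a) i

noncomputable def Ds (x : ℝ) : PowerSeries ℝ :=
  PowerSeries.mk fun j => (-4 : ℝ) ^ j * rchoose (-x / 2) j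

lemma Ds_zero : Ds 0 = 1 := by
  ext n
  cases n with
  | zero => simp [Ds, rchoose]
  | succ n =>
    simp [Ds, PowerSeries.coeff_mk, rchoose_zero_left, PowerSeries.coeff_one]

lemma Fs_mul_Fs (a b : ℝ) : Fs a * Fs b = Fs (a + b) * Fs 0 := by
  ext n
  rw [PowerSeries.coeff_mul, PowerSeries.coeff_mul]
  simp only [Fs, PowerSeries.coeff_mk, add_zero]
  exact conv_pair a b n

lemma Ds_mul_Ds (x y : ℝ) : Ds x * Ds y = Ds (x + y) := by
  ext n
  rw [PowerSeries.coeff_mul]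
  simp only [Ds, PowerSeries.coeff_mk]
  calc ∑ p ∈ Finset.HasAntidiagonal.antidiagonal n,
        ((-4:ℝ)^p.1 * rchoose (-x/2) p.1) * ((-4:ℝ)^p.2 * rchoose (-y/2) p.2)
      = ∑ p ∈ Finset.HasAntidiagonal.antidiagonal n,
          (-4:ℝ)^n * (rchoose (-x/2) p.1 * rchoose (-y/2) p.2) := by
        apply Finset.sum_congr rfl
        intro p hp
        rw [← Finset.HasAntidiagonal.mem_antidiagonal.mp hp, pow_add]
        ring
    _ = (-4:ℝ)^n * rchoose (-x/2 + -y/2) n := by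
        rw [← Finset.mul_sum, vandermonde_real]
    _ = (-4:ℝ)^n * rchoose (-(x+y)/2) n := by ring_nf

lemma Fs_zero_eq : Fs 0 = Ds 1 := by
  ext n
  simp only [Fs, Ds, PowerSeries.coeff_mk, add_zero]
  have := central_rchoose n
  rw [this]
  try norm_num

lemma sum_antidiagonalTuple_succ (k n : ℕ) (h : Fin (k+1) → ℕ → ℝ) :
    ∑ f ∈ Finset.Nat.antidiagonalTuple (k+1) n, ∏ m, h m (f m)
      = ∑ p ∈ Finset.HasAntidiagonal.antidiagonal n, h 0 p.1 *
          ∑ g ∈ Finset.Nat.antidiagonalTuple k p.2, ∏ m : Fin k, h m.succ (g m) := by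
  simp_rw [Finset.mul_sum]
  rw [Finset.sum_sigma']
  apply Finset.sum_nbij' (i := fun f => (⟨(f 0, ∑ m : Fin k, f m.succ), Fin.tail f⟩ :
      Σ p : ℕ × ℕ, Fin k → ℕ))
    (j := fun x => Fin.cons x.1.1 x.2)
  · intro f hf
    simp only [Finset.mem_sigma, Finset.HasAntidiagonal.mem_antidiagonal]
    constructor
    · rw [← Finset.Nat.mem_antidiagonalTuple.mp hf, Fin.sum_univ_succ]
    · exact Finset.Nat.mem_antidiagonalTuple.mpr rfl
  · intro x hx
    simp only [Finset.mem_sigma, Finset.HasAntidiagonal.mem_antidiagonal] at hx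
    apply Finset.Nat.mem_antidiagonalTuple.mpr
    rw [Fin.sum_univ_succ]
    simp only [Fin.cons_zero, Fin.cons_succ]
    rw [Finset.Nat.mem_antidiagonalTuple.mp hx.2, hx.1]
  · intro f _
    simp [Fin.cons_self_tail]
  · intro x hx
    obtain ⟨⟨p1, p2⟩, v⟩ := x
    simp only [Finset.mem_sigma, Finset.HasAntidiagonal.mem_antidiagonal] at hx
    have hv : ∑ m : Fin k, v m = p2 := Finset.Nat.mem_antidiagonalTuple.mp hx.2
    simp only [Fin.cons_zero, Fin.cons_succ, Fin.tail_cons, hv]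
  · intro f _
    rw [Fin.prod_univ_succ]
    simp [Fin.tail]
lemma tuple_series : ∀ (t : ℕ), 0 < t → ∀ (ℓ : Fin t → ℝ),
    (PowerSeries.mk fun n => ∑ f ∈ Finset.Nat.antidiagonalTuple t n,
        ∏ m, rchoose (2 * (f m : ℝ) + ℓ m) (f m))
      = Fs (∑ m, ℓ m) * Ds ((t : ℝ) - 1) := by
  intro t
  induction t with
  | zero => omega
  | succ t iht =>
    intro _ ℓ
    rcases Nat.eq_zero_or_pos t with rfl | htpos
    · -- base case t = 1
      have : ((0:ℕ)+1 : ℝ) - 1 = 0 := by norm_num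
      rw [show (((0:ℕ)+1 : ℕ) : ℝ) - 1 = 0 by norm_num, Ds_zero, mul_one]
      ext n
      simp only [PowerSeries.coeff_mk, Fs, Finset.Nat.antidiagonalTuple_one,
        Finset.sum_singleton, Fin.prod_univ_one, Fin.sum_univ_one]
      simp
    · -- step
      have hstep : (PowerSeries.mk fun n => ∑ f ∈ Finset.Nat.antidiagonalTuple (t+1) n,
            ∏ m, rchoose (2 * (f m : ℝ) + ℓ m) (f m))
          = Fs (ℓ 0) * (PowerSeries.mk fun n => ∑ g ∈ Finset.Nat.antidiagonalTuple t n,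
              ∏ m : Fin t, rchoose (2 * (g m : ℝ) + ℓ m.succ) (g m)) := by
        ext n
        rw [PowerSeries.coeff_mul]
        simp only [PowerSeries.coeff_mk, Fs]
        exact sum_antidiagonalTuple_succ t n (fun m i => rchoose (2 * (i : ℝ) + ℓ m) i)
      rw [hstep, iht htpos (fun m => ℓ m.succ)]
      rw [← mul_assoc, Fs_mul_Fs, Fs_zero_eq, mul_assoc, Ds_mul_Ds]
      rw [Fin.sum_univ_succ]
      congr 1
      push_cast
      ring

lemma Gamma_nat_add (x : ℝ) (hx : 0 < x) (n : ℕ) :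
    Real.Gamma ((n : ℝ) + x) = (∏ j ∈ Finset.range n, (x + j)) * Real.Gamma x := by
  induction n with
  | zero => simp
  | succ n ih =>
    have hpos : (0:ℝ) < (n:ℝ) + x := by positivity
    rw [show ((n+1:ℕ):ℝ) + x = ((n:ℝ) + x) + 1 by push_cast; ring,
      Real.Gamma_add_one (ne_of_gt hpos), ih, Finset.prod_range_succ]
    ring

lemma neg_prod (x : ℝ) (n : ℕ) :
    ∏ j ∈ Finset.range n, (-x - (j:ℝ)) = (-1:ℝ)^n * ∏ j ∈ Finset.range n, (x + j) := by
  induction n with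
  | zero => simp
  | succ n ih =>
    rw [Finset.prod_range_succ, Finset.prod_range_succ, ih, pow_succ]
    ring

theorem sum_gen_binom_tuple_eq_gamma (n t : ℕ) (ht : 0 < t) (ℓ : Fin t → ℝ)
    (hℓ : ∑ m, ℓ m = 0) :
    ∑ f ∈ Finset.Nat.antidiagonalTuple t n,
        ∏ m : Fin t, rchoose (2 * (f m : ℝ) + ℓ m) (f m)
      = 4 ^ n / (Nat.factorial n : ℝ)
          * Real.Gamma ((n : ℝ) + (t : ℝ) / 2) / Real.Gamma ((t : ℝ) / 2) := by
  have h := tuple_series t ht ℓ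
  rw [hℓ, Fs_zero_eq, Ds_mul_Ds, show (1:ℝ) + ((t:ℝ) - 1) = (t:ℝ) by ring] at h
  have hc := congrArg (PowerSeries.coeff (R := ℝ) n) h
  simp only [PowerSeries.coeff_mk, Ds] at hc
  rw [hc]
  -- now: (-4)^n * rchoose (-(t:ℝ)/2) n = RHS
  have htpos : (0:ℝ) < (t:ℝ) / 2 := by positivity
  have hΓ : Real.Gamma ((n : ℝ) + (t:ℝ)/2)
      = (∏ j ∈ Finset.range n, ((t:ℝ)/2 + j)) * Real.Gamma ((t:ℝ)/2) :=
    Gamma_nat_add _ htpos n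
  have hΓne : Real.Gamma ((t:ℝ)/2) ≠ 0 := ne_of_gt (Real.Gamma_pos_of_pos htpos)
  rw [hΓ, rchoose]
  have hprod : ∏ j ∈ Finset.range n, (-(t:ℝ)/2 - (j:ℝ))
      = (-1:ℝ)^n * ∏ j ∈ Finset.range n, ((t:ℝ)/2 + j) := by
    have := neg_prod ((t:ℝ)/2) n
    rw [show -((t:ℝ)/2) = -(t:ℝ)/2 by ring] at this
    exact this
  rw [hprod]
  have hfac : ((n.factorial : ℝ)) ≠ 0 := Nat.cast_ne_zero.2 n.factorial_ne_zero
  field_simp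
  rw [show ((-4:ℝ))^n = (-1:ℝ)^n * 4^n by rw [← mul_pow]; norm_num]
  ring_nf
  rw [show ((-1:ℝ))^(n*2) = 1 by rw [mul_comm, pow_mul]; norm_num]
  ring
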